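/- Let F/F₀ be a quadratic extension of nonarchimedean locally compact fields of residue characteristic p ≠ 2, with nontrivial automorphism σ, ring of integers o_F and maximal ideal p_F. Let n be an odd positive integer, and let 𝔞 ⊆ M_n(F) be the standard minimal hereditary (Iwahori) order, i.e. the set of matrices x with x_{ij} ∈ o_F for i ≤ j and x_{ij} ∈ p_F for i > j. Then there exist g₁ ∈ GL_n(F) and units a₁, …, a_n ∈ o_F^× such that σ(ᵗg₁⁻¹)·g₁⁻¹ = A, where A is the antidiagonal matrix whose (i, n+1−i) entry is a_i and all other entries are 0, and moreover σ(ᵗ(g₁⁻¹·𝔞·g₁)) = g₁⁻¹·𝔞·g₁. -/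

import Mathlib

open Matrix

local notation "ℤᵐ⁰" => WithZero (Multiplicative ℤ)


lemma aux_smallpow (t : ℤᵐ⁰) (ht : t < 1) (γ : ℤᵐ⁰) (hγ : γ ≠ 0) :
    ∃ N : ℕ, ∀ M, N ≤ M → t ^ M < γ := by
  rcases eq_or_ne t 0 with rfl | ht0
  · exact ⟨1, fun M hM => by
      rw [zero_pow (by omega)]; exact zero_lt_iff.mpr hγ⟩
  · obtain ⟨x, rfl⟩ := WithZero.ne_zero_iff_exists.mp ht0
    obtain ⟨g, rfl⟩ := WithZero.ne_zero_iff_exists.mp hγ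
    have hx : Multiplicative.toAdd x < 0 := by
      have h := ht
      rw [show (1 : ℤᵐ⁰) = ((1 : Multiplicative ℤ) : ℤᵐ⁰) from rfl,
        WithZero.coe_lt_coe, ← Multiplicative.toAdd_lt] at h
      simpa using h
    refine ⟨((Multiplicative.toAdd g).natAbs + 1), fun M hM => ?_⟩
    rw [← WithZero.coe_pow, WithZero.coe_lt_coe, ← Multiplicative.toAdd_lt, toAdd_pow]
    have h1 : Multiplicative.toAdd x ≤ -1 := by omega
    have hM' : ((Multiplicative.toAdd g).natAbs + 1 : ℤ) ≤ (M : ℤ) := by exact_mod_cast hM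
    have h2 : M • Multiplicative.toAdd x ≤ (M : ℤ) * (-1) := by
      rw [nsmul_eq_mul]
      exact mul_le_mul_of_nonneg_left h1 (by positivity)
    refine lt_of_le_of_lt h2 ?_
    omega

-- units of the valuation subring
lemma aux_isUnit_iff (F : Type*) [Field F] [Valued F ℤᵐ⁰]
    (x : (Valued.v : Valuation F ℤᵐ⁰).valuationSubring) :
    IsUnit x ↔ Valued.v (x : F) = 1 := by
  constructor
  · rintro ⟨u, rfl⟩
    have h := u.mul_inv
    have h2 : Valued.v ((u : (Valued.v : Valuation F ℤᵐ⁰).valuationSubring) : F) *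
        Valued.v (((u⁻¹ : _ˣ) : (Valued.v : Valuation F ℤᵐ⁰).valuationSubring) : F) = 1 := by
      rw [← Valuation.map_mul]
      norm_cast
      simp
    have hu1 : Valued.v ((u : (Valued.v : Valuation F ℤᵐ⁰).valuationSubring) : F) ≤ 1 :=
      (u : (Valued.v : Valuation F ℤᵐ⁰).valuationSubring).2
    have hu2 : Valued.v (((u⁻¹ : _ˣ) : (Valued.v : Valuation F ℤᵐ⁰).valuationSubring) : F) ≤ 1 :=
      ((u⁻¹ : _ˣ) : (Valued.v : Valuation F ℤᵐ⁰).valuationSubring).2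
    refine le_antisymm hu1 ?_
    calc (1 : ℤᵐ⁰) = _ * _ := h2.symm
    _ ≤ Valued.v ((u : (Valued.v : Valuation F ℤᵐ⁰).valuationSubring) : F) * 1 :=
        mul_le_mul_right hu2 _
    _ = _ := mul_one _
  · intro hx
    have hne : (x : F) ≠ 0 := by
      intro h
      rw [h] at hx; simp at hx
    have hinv : Valued.v ((x : F)⁻¹) ≤ 1 := by
      rw [map_inv₀, hx]; simp
    refine IsUnit.of_mul_eq_one ⟨(x : F)⁻¹, hinv⟩ ?_
    ext
    push_cast
    exact mul_inv_cancel₀ hne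

lemma aux_residue_zero_iff (F : Type*) [Field F] [Valued F ℤᵐ⁰]
    (x : (Valued.v : Valuation F ℤᵐ⁰).valuationSubring) :
    IsLocalRing.residue _ x = 0 ↔ Valued.v (x : F) < 1 := by
  rw [IsLocalRing.residue_eq_zero_iff, IsLocalRing.mem_maximalIdeal, mem_nonunits_iff,
    aux_isUnit_iff]
  have hle : Valued.v (x : F) ≤ 1 := x.2
  constructor
  · intro h; exact lt_of_le_of_ne hle h
  · intro h; exact ne_of_lt h


lemma aux_pow_anti (t : ℤᵐ⁰) (ht : t ≤ 1) {i j : ℕ} (hij : i ≤ j) : t ^ j ≤ t ^ i := by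
  calc t ^ j = t ^ i * t ^ (j - i) := by rw [← pow_add]; congr 1; omega
  _ ≤ t ^ i * 1 := mul_le_mul_right (pow_le_one' ht _) _
  _ = t ^ i := mul_one _

lemma aux_newton (F : Type*) [Field F] [Valued F ℤᵐ⁰] [CompleteSpace F] (σ : F ≃+* F)
    (hσv : ∀ x : F, Valued.v (σ x) = Valued.v x) (h2 : Valued.v (2 : F) = 1)
    (u a₀ : F) (hu : σ u = u) (ha : σ a₀ = a₀) (hva : Valued.v a₀ = 1)
    (hinit : Valued.v (a₀ ^ 2 - u) < 1) : ∃ c : F, σ c = c ∧ c ^ 2 = u := by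
  have h2ne : (2 : F) ≠ 0 := by
    intro h; rw [h] at h2; simp at h2
  set t₀ : ℤᵐ⁰ := Valued.v (a₀ ^ 2 - u) with ht₀
  have ht₀1 : t₀ < 1 := hinit
  have ht₀le : t₀ ≤ 1 := le_of_lt ht₀1
  -- the Newton sequence
  set seq : ℕ → F := fun k => Nat.rec a₀ (fun _ a => (a + u / a) / 2) k with hseq
  have hseq0 : seq 0 = a₀ := rfl
  have hseqS : ∀ k, seq (k + 1) = (seq k + u / seq k) / 2 := fun k => rfl
  have inv : ∀ k, σ (seq k) = seq k ∧ Valued.v (seq k) = 1 ∧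
      Valued.v (seq k ^ 2 - u) ≤ t₀ ^ (k + 1) := by
    intro k
    induction k with
    | zero => exact ⟨ha, hva, by rw [hseq0, pow_one]⟩
    | succ k ih =>
      obtain ⟨hs, h1, hb⟩ := ih
      have hne : seq k ≠ 0 := by
        intro h; rw [h] at h1; simp at h1
      have htk1 : Valued.v (seq k ^ 2 - u) < 1 :=
        lt_of_le_of_lt (le_trans hb (aux_pow_anti t₀ ht₀le (Nat.le_add_left 1 k))) (by
          simpa using ht₀1)
      have key1 : seq (k + 1) ^ 2 - u = ((seq k ^ 2 - u) / (2 * seq k)) ^ 2 := by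
        rw [hseqS]; field_simp; ring
      have key2 : seq (k + 1) = seq k + (u - seq k ^ 2) / (2 * seq k) := by
        rw [hseqS]; field_simp; ring
      have hvb : Valued.v (seq (k + 1) ^ 2 - u) = Valued.v (seq k ^ 2 - u) ^ 2 := by
        rw [key1, map_pow, map_div₀, Valuation.map_mul, h2, h1, mul_one, div_one]
      refine ⟨?_, ?_, ?_⟩
      · rw [hseqS]
        rw [map_div₀, map_add, map_div₀, hs, hu, map_ofNat]
      · rw [key2]
        rw [Valuation.map_add_eq_of_lt_left]
        · exact h1
        · rw [map_div₀, Valuation.map_mul, h2, h1, mul_one, div_one,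
            Valuation.map_sub_swap]
          exact htk1
      · rw [hvb]
        calc Valued.v (seq k ^ 2 - u) ^ 2 ≤ (t₀ ^ (k + 1)) ^ 2 := pow_le_pow_left' hb 2
        _ = t₀ ^ (2 * (k + 1)) := by rw [← pow_mul, mul_comm]
        _ ≤ t₀ ^ (k + 2) := aux_pow_anti t₀ ht₀le (by omega)
  rcases eq_or_ne t₀ 0 with h0 | h0
  · refine ⟨a₀, ha, ?_⟩
    have h : a₀ ^ 2 - u = 0 := by
      have := ht₀.symm.trans h0
      exact (Valuation.zero_iff _).mp this
    rw [sub_eq_zero] at h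
    exact h
  · -- Cauchy
    have hstep : ∀ k, Valued.v (seq (k + 1) - seq k) ≤ t₀ ^ (k + 1) := by
      intro k
      obtain ⟨hs, h1, hb⟩ := inv k
      have hne : seq k ≠ 0 := by intro h; rw [h] at h1; simp at h1
      have key2 : seq (k + 1) - seq k = (u - seq k ^ 2) / (2 * seq k) := by
        rw [hseqS]; field_simp; ring
      rw [key2, map_div₀, Valuation.map_mul, h2, h1, mul_one, div_one,
        Valuation.map_sub_swap]
      exact hb
    have hdiff : ∀ N k, Valued.v (seq (N + k) - seq N) ≤ t₀ ^ (N + 1) := by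
      intro N k
      induction k with
      | zero => simp
      | succ k ih =>
        have e1 : N + (k + 1) = (N + k) + 1 := by omega
        rw [e1]
        have hsplit : seq ((N + k) + 1) - seq N =
            (seq ((N + k) + 1) - seq (N + k)) + (seq (N + k) - seq N) := by ring
        calc Valued.v (seq ((N + k) + 1) - seq N)
            ≤ max (Valued.v (seq ((N + k) + 1) - seq (N + k)))
              (Valued.v (seq (N + k) - seq N)) := by rw [hsplit]; exact Valuation.map_add _ _ _
        _ ≤ t₀ ^ (N + 1) := max_le
            (le_trans (hstep (N + k)) (aux_pow_anti t₀ ht₀le (by omega))) ih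
    have hcauchy : CauchySeq seq := by
      rw [(Valued.hasBasis_uniformity F ℤᵐ⁰).cauchySeq_iff]
      intro γ _
      obtain ⟨N, hN⟩ := aux_smallpow t₀ ht₀1 (MonoidWithZeroHom.ValueGroup₀.embedding γ.1) (fun h => γ.ne_zero (MonoidWithZeroHom.ValueGroup₀.embedding_injective (h.trans (map_zero _).symm)))
      refine ⟨N, fun i hi j hj => ?_⟩
      show Valued.v.restrict (seq j - seq i) < γ.1
      rw [Valuation.restrict_lt_iff_lt_embedding]
      have h1 : Valued.v (seq i - seq N) ≤ t₀ ^ (N + 1) := by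
        have := hdiff N (i - N); rwa [Nat.add_sub_cancel' hi] at this
      have h2' : Valued.v (seq j - seq N) ≤ t₀ ^ (N + 1) := by
        have := hdiff N (j - N); rwa [Nat.add_sub_cancel' hj] at this
      have : seq j - seq i = (seq j - seq N) - (seq i - seq N) := by ring
      rw [this]
      calc Valued.v _ ≤ max (Valued.v (seq j - seq N)) (Valued.v (seq i - seq N)) :=
            Valuation.map_sub _ _ _
      _ ≤ t₀ ^ (N + 1) := max_le h2' h1
      _ < _ := hN (N + 1) (by omega)
    obtain ⟨cc, hcc⟩ := cauchySeq_tendsto_of_complete hcauchy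
    have hclose : ∀ γ : (MonoidWithZeroHom.ValueGroup₀ (.ofClass (Valued.v : Valuation F ℤᵐ⁰)))ˣ, ∀ᶠ k in Filter.atTop, Valued.v (seq k - cc) < MonoidWithZeroHom.ValueGroup₀.embedding γ.1 := by
      intro γ
      exact hcc (Valued.mem_nhds.mpr ⟨γ, fun y hy => (Valuation.restrict_lt_iff_lt_embedding _).mp hy⟩)
    have hzero : ∀ z : F, (∀ γ : (MonoidWithZeroHom.ValueGroup₀ (.ofClass (Valued.v : Valuation F ℤᵐ⁰)))ˣ, Valued.v z < MonoidWithZeroHom.ValueGroup₀.embedding γ.1) → z = 0 := by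
      intro z hz
      by_contra hzne
      have hvz : Valued.v.restrict z ≠ 0 := by
        intro h
        have h' := congrArg MonoidWithZeroHom.ValueGroup₀.embedding h
        rw [Valuation.embedding_restrict, map_zero] at h'
        exact hzne ((Valuation.zero_iff _).mp h')
      have := hz (Units.mk0 _ hvz)
      simp at this
    have hfix : σ cc = cc := by
      have h : σ cc - cc = 0 := by
        apply hzero
        intro γ
        obtain ⟨k, hk⟩ := (hclose γ).exists
        have hsk := (inv k).1
        have hsp : σ cc - cc = σ (cc - seq k) + (seq k - cc) := by
          rw [map_sub, hsk]; ring
        rw [hsp]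
        calc Valued.v _ ≤ max (Valued.v (σ (cc - seq k))) (Valued.v (seq k - cc)) :=
              Valuation.map_add _ _ _
        _ = Valued.v (seq k - cc) := by
              rw [hσv, Valuation.map_sub_swap]; exact max_self _
        _ < _ := hk
      rw [sub_eq_zero] at h
      exact h
    have hvcc : Valued.v cc = 1 := by
      obtain ⟨k, hk⟩ := (hclose 1).exists
      have h1 := (inv k).2.1
      have hh : cc = seq k + (cc - seq k) := by ring
      rw [hh, Valuation.map_add_eq_of_lt_left, h1]
      rw [h1, Valuation.map_sub_swap]
      simpa using hk
    have hsq : cc ^ 2 - u = 0 := by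
      apply hzero
      intro γ
      have E2 : ∀ᶠ k in Filter.atTop, t₀ ^ (k + 1) < MonoidWithZeroHom.ValueGroup₀.embedding γ.1 := by
        obtain ⟨N, hN⟩ := aux_smallpow t₀ ht₀1 (MonoidWithZeroHom.ValueGroup₀.embedding γ.1) (fun h => γ.ne_zero (MonoidWithZeroHom.ValueGroup₀.embedding_injective (h.trans (map_zero _).symm)))
        exact Filter.eventually_atTop.mpr ⟨N, fun k hk => hN (k + 1) (by omega)⟩
      obtain ⟨k, hk1, hk2⟩ := ((hclose γ).and E2).exists
      have h1 := (inv k).2.1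
      have h3 := (inv k).2.2
      have hsplit : cc ^ 2 - u = (cc - seq k) * (cc + seq k) + (seq k ^ 2 - u) := by ring
      rw [hsplit]
      have hsum : Valued.v (cc + seq k) ≤ 1 := by
        calc Valued.v (cc + seq k) ≤ max (Valued.v cc) (Valued.v (seq k)) :=
              Valuation.map_add _ _ _
        _ ≤ 1 := by rw [hvcc, h1]; simp
      calc Valued.v _
          ≤ max (Valued.v ((cc - seq k) * (cc + seq k))) (Valued.v (seq k ^ 2 - u)) :=
            Valuation.map_add _ _ _
      _ < _ := by
          apply max_lt _ (lt_of_le_of_lt h3 hk2)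
          rw [Valuation.map_mul]
          calc Valued.v (cc - seq k) * Valued.v (cc + seq k)
              ≤ Valued.v (cc - seq k) * 1 := mul_le_mul_right hsum _
          _ = Valued.v (seq k - cc) := by rw [mul_one, Valuation.map_sub_swap]
          _ < _ := hk1
    rw [sub_eq_zero] at hsq
    exact ⟨cc, hfix, hsq⟩

lemma aux_partA (p : ℕ) (hp : p.Prime) (hp2 : p ≠ 2)
    (F : Type*) [Field F] [Valued F ℤᵐ⁰] [CompleteSpace F]
    (hfinres : Finite (IsLocalRing.ResidueField
      ((Valued.v : Valuation F ℤᵐ⁰).valuationSubring)))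
    (hcharres : CharP (IsLocalRing.ResidueField
      ((Valued.v : Valuation F ℤᵐ⁰).valuationSubring)) p)
    (σ : F ≃+* F) (hσv : ∀ x : F, Valued.v (σ x) = Valued.v x) :
    Valued.v (2 : F) = 1 ∧ ∃ c d : F, σ c = c ∧ σ d = d ∧ c ^ 2 + d ^ 2 = -1 := by
  set O := (Valued.v : Valuation F ℤᵐ⁰).valuationSubring with hO
  set k := IsLocalRing.ResidueField O with hk
  haveI := hfinres
  haveI := hcharres
  haveI : NeZero p := ⟨hp.ne_zero⟩
  -- v 2 = 1
  have hres2 : (IsLocalRing.residue O) (2 : O) = (2 : k) := by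
    simp [map_ofNat]
  have h2k : (2 : k) ≠ 0 := by
    intro h
    have : ((2 : ℕ) : k) = 0 := by exact_mod_cast h
    rw [CharP.cast_eq_zero_iff k p 2] at this
    exact hp2 ((Nat.prime_dvd_prime_iff_eq hp Nat.prime_two).mp this)
  have hv2le : Valued.v (2 : F) ≤ 1 := by
    have : ((2 : O) : F) = (2 : F) := by norm_cast
    rw [← this]; exact (2 : O).2
  have hv2 : Valued.v (2 : F) = 1 := by
    rcases lt_or_eq_of_le hv2le with h | h
    · exfalso
      apply h2k
      rw [← hres2]
      rw [aux_residue_zero_iff F (2 : O)]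
      have : ((2 : O) : F) = (2 : F) := by norm_cast
      rw [this]; exact h
    · exact h
  refine ⟨hv2, ?_⟩
  -- sum of two squares in the residue field
  obtain ⟨A, B, hAB⟩ := CharP.sq_add_sq k p (-1)
  -- make first coordinate nonzero
  have hm1 : ((-1 : ℤ) : k) = (-1 : k) := by norm_cast
  rw [hm1] at hAB
  have hswap : ∃ A B : ℕ, ((A : k) ≠ 0) ∧ (A : k) ^ 2 + (B : k) ^ 2 = -1 := by
    by_cases hA : (A : k) = 0
    · refine ⟨B, A, ?_, by rw [add_comm]; exact hAB⟩
      intro hB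
      rw [hA, hB] at hAB
      norm_num at hAB
    · exact ⟨A, B, hA, hAB⟩
  obtain ⟨A, B, hA0, hAB⟩ := hswap
  -- bridging nat casts
  have hcast : ∀ m : ℕ, ((m : O) : F) = (m : F) := by intro m; push_cast; ring
  have hvA : Valued.v ((A : F)) = 1 := by
    have hle : Valued.v ((A : F)) ≤ 1 := by rw [← hcast]; exact (A : O).2
    rcases lt_or_eq_of_le hle with h | h
    · exfalso
      apply hA0
      have : IsLocalRing.residue O ((A : O)) = (A : k) := by simp
      rw [← this, aux_residue_zero_iff F (A : O), hcast]
      exact h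
    · exact h
  -- the approximate equation
  have happrox : Valued.v ((A : F) ^ 2 + (B : F) ^ 2 + 1) < 1 := by
    have hz : IsLocalRing.residue O ((A : O) ^ 2 + (B : O) ^ 2 + 1) = 0 := by
      rw [map_add, map_add, map_pow, map_pow, _root_.map_one]
      have hA' : IsLocalRing.residue O ((A : O)) = (A : k) := by simp
      have hB' : IsLocalRing.residue O ((B : O)) = (B : k) := by simp
      rw [hA', hB', hAB]
      ring
    rw [aux_residue_zero_iff F _] at hz
    have : (((A : O) ^ 2 + (B : O) ^ 2 + 1 : O) : F) = (A : F) ^ 2 + (B : F) ^ 2 + 1 := by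
      push_cast; ring
    rwa [this] at hz
  -- apply Newton to u = -(1 + B^2)
  obtain ⟨c, hc, hcsq⟩ := aux_newton F σ hσv hv2 (-(1 + (B : F) ^ 2)) (A : F)
    (by simp) (by simp) hvA
    (by
      have : (A : F) ^ 2 - -(1 + (B : F) ^ 2) = (A : F) ^ 2 + (B : F) ^ 2 + 1 := by ring
      rw [this]; exact happrox)
  exact ⟨c, (B : F), hc, by simp, by rw [hcsq]; ring⟩

section PartB
variable {F : Type*} [Field F] (σ : F ≃+* F) (c d : F)

/-- The 2×2 building block. -/
noncomputable def auxK (c d : F) : Matrix (Fin 2) (Fin 2) F := !![c, d; d, -c]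

lemma auxK_sigma (hc : σ c = c) (hd : σ d = d) (e a : Fin 2) :
    σ (auxK c d e a) = auxK c d e a := by
  fin_cases e <;> fin_cases a <;> simp [auxK, hc, hd]

lemma auxK_gram (hcd : c ^ 2 + d ^ 2 = -1) (a b : Fin 2) :
    (∑ e : Fin 2, auxK c d e a * auxK c d e b) = if a = b then (-1 : F) else 0 := by
  fin_cases a <;> fin_cases b <;>
    simp [Fin.sum_univ_two, auxK] <;> first | ring1 | linear_combination hcd | linear_combination -hcd

end PartB

section HeadMatrix
variable {F : Type*} [Field F] (σ : F ≃+* F) (c d : F) {q r : ℕ}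

/-- Head matrix on the structured index type. -/
noncomputable def auxH (c d : F) (q r : ℕ) :
    Matrix ((Fin 2 × Fin q) ⊕ Fin r) ((Fin 2 × Fin q) ⊕ Fin r) F :=
  Matrix.of fun x y =>
    match x, y with
    | Sum.inl (e, w), Sum.inl (f, v) => if w = v then auxK c d e f else 0
    | Sum.inr z, Sum.inr z' => if z = z' then (1 : F) else 0
    | _, _ => 0

lemma auxH_sigma (hc : σ c = c) (hd : σ d = d) (x y : (Fin 2 × Fin q) ⊕ Fin r) :
    σ (auxH c d q r x y) = auxH c d q r x y := by
  rcases x with ⟨e, w⟩ | z <;> rcases y with ⟨f, v⟩ | z' <;>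
    simp only [auxH, Matrix.of_apply] <;>
    first
      | (split <;> simp [auxK_sigma σ c d hc hd])
      | simp

lemma auxH_gram (hc : σ c = c) (hd : σ d = d) (hcd : c ^ 2 + d ^ 2 = -1)
    (x y : (Fin 2 × Fin q) ⊕ Fin r) :
    (∑ k : (Fin 2 × Fin q) ⊕ Fin r, σ (auxH c d q r k x) * auxH c d q r k y)
      = if x = y then Sum.elim (fun _ => (-1 : F)) (fun _ => (1 : F)) x else 0 := by
  rw [Fintype.sum_sum_type]
  rcases x with ⟨a, s⟩ | z
  · rcases y with ⟨b, t⟩ | z'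
    · -- both in the 2×2-blocks part
      have h2 : (∑ z : Fin r, σ (auxH c d q r (Sum.inr z) (Sum.inl (a, s))) *
          auxH c d q r (Sum.inr z) (Sum.inl (b, t))) = 0 := by
        apply Finset.sum_eq_zero; intro z _; simp [auxH]
      rw [h2, add_zero, Fintype.sum_prod_type]
      rcases eq_or_ne s t with rfl | hst
      · have : ∀ e : Fin 2, (∑ w : Fin q,
            σ (auxH c d q r (Sum.inl (e, w)) (Sum.inl (a, s))) *
              auxH c d q r (Sum.inl (e, w)) (Sum.inl (b, s)))
            = auxK c d e a * auxK c d e b := by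
          intro e
          rw [Finset.sum_eq_single s]
          · simp [auxH, auxK_sigma σ c d hc hd]
          · intro w _ hw; simp [auxH, hw]
          · intro h; exact absurd (Finset.mem_univ s) h
        rw [Finset.sum_congr rfl fun e _ => this e, auxK_gram c d hcd]
        simp
      · have : ∀ e : Fin 2, (∑ w : Fin q,
            σ (auxH c d q r (Sum.inl (e, w)) (Sum.inl (a, s))) *
              auxH c d q r (Sum.inl (e, w)) (Sum.inl (b, t))) = 0 := by
          intro e
          apply Finset.sum_eq_zero; intro w _
          rcases eq_or_ne w s with rfl | hws
          · simp [auxH, hst]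
          · simp [auxH, hws]
        rw [Finset.sum_congr rfl fun e _ => this e]
        simp [hst]
    · -- x block, y tail : zero
      have h1 : (∑ p : Fin 2 × Fin q, σ (auxH c d q r (Sum.inl p) (Sum.inl (a, s))) *
          auxH c d q r (Sum.inl p) (Sum.inr z')) = 0 := by
        apply Finset.sum_eq_zero; rintro ⟨e, w⟩ _; simp [auxH]
      have h2 : (∑ z : Fin r, σ (auxH c d q r (Sum.inr z) (Sum.inl (a, s))) *
          auxH c d q r (Sum.inr z) (Sum.inr z')) = 0 := by
        apply Finset.sum_eq_zero; intro z _; simp [auxH]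
      rw [h1, h2, add_zero]
      simp
  · rcases y with ⟨b, t⟩ | z'
    · have h1 : (∑ p : Fin 2 × Fin q, σ (auxH c d q r (Sum.inl p) (Sum.inr z)) *
          auxH c d q r (Sum.inl p) (Sum.inl (b, t))) = 0 := by
        apply Finset.sum_eq_zero; rintro ⟨e, w⟩ _; simp [auxH]
      have h2 : (∑ z'' : Fin r, σ (auxH c d q r (Sum.inr z'') (Sum.inr z)) *
          auxH c d q r (Sum.inr z'') (Sum.inl (b, t))) = 0 := by
        apply Finset.sum_eq_zero; intro z'' _; simp [auxH]
      rw [h1, h2, add_zero]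
      simp
    · have h1 : (∑ p : Fin 2 × Fin q, σ (auxH c d q r (Sum.inl p) (Sum.inr z)) *
          auxH c d q r (Sum.inl p) (Sum.inr z')) = 0 := by
        apply Finset.sum_eq_zero; rintro ⟨e, w⟩ _; simp [auxH]
      rw [h1, zero_add]
      rw [Finset.sum_eq_single z]
      · rcases eq_or_ne z z' with rfl | hzz
        · simp [auxH]
        · simp [auxH, hzz]
      · intro w _ hw
        rcases eq_or_ne w z' with rfl | hwz
        · simp [auxH, hw]
        · simp [auxH, hw, hwz]
      · intro h; exact absurd (Finset.mem_univ z) h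

end HeadMatrix

section BigMatrix
variable {F : Type*} [Field F] (σ : F ≃+* F) (c d : F) {q r m : ℕ}

/-- column pairing -/
def auxPair (m : ℕ) : (Fin m ⊕ (Fin 1 ⊕ Fin m)) → (Fin m ⊕ (Fin 1 ⊕ Fin m)) :=
  fun x => match x with
  | Sum.inl t => Sum.inr (Sum.inr t)
  | Sum.inr (Sum.inl z) => Sum.inr (Sum.inl z)
  | Sum.inr (Sum.inr t) => Sum.inl t

/-- the big matrix, rows indexed by `T ⊕ Fin m`, columns by `Fin m ⊕ (Fin 1 ⊕ Fin m)` -/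
noncomputable def auxB (c d : F) (q r m : ℕ)
    (ψ : (Fin m ⊕ Fin 1) ≃ ((Fin 2 × Fin q) ⊕ Fin r)) :
    Matrix (((Fin 2 × Fin q) ⊕ Fin r) ⊕ Fin m) (Fin m ⊕ (Fin 1 ⊕ Fin m)) F :=
  Matrix.of fun k x =>
    match k, x with
    | Sum.inl w, Sum.inl t => auxH c d q r w (ψ (Sum.inl t))
    | Sum.inl w, Sum.inr (Sum.inl z) => auxH c d q r w (ψ (Sum.inr z))
    | Sum.inl w, Sum.inr (Sum.inr t) => auxH c d q r w (ψ (Sum.inl t))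
    | Sum.inr s, Sum.inl t => if s = t then 1 else 0
    | Sum.inr _, Sum.inr (Sum.inl _) => 0
    | Sum.inr s, Sum.inr (Sum.inr t) => if s = t then -1 else 0

/-- the anti-diagonal values -/
noncomputable def auxA (q r m : ℕ)
    (ψ : (Fin m ⊕ Fin 1) ≃ ((Fin 2 × Fin q) ⊕ Fin r)) :
    (Fin m ⊕ (Fin 1 ⊕ Fin m)) → F :=
  fun x => match x with
  | Sum.inl _ => -2
  | Sum.inr (Sum.inl z) =>
      Sum.elim (fun _ => (-1 : F)) (fun _ => (1 : F)) (ψ (Sum.inr z))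
  | Sum.inr (Sum.inr _) => -2

lemma aux_tail {F : Type*} [Field F] (σ : F ≃+* F) {m : ℕ} (s t : Fin m) (A B : F) :
    (∑ k : Fin m, σ (if k = s then A else 0) * (if k = t then B else 0))
      = if s = t then σ A * B else 0 := by
  rcases eq_or_ne s t with rfl | hst
  · rw [if_pos rfl, Finset.sum_eq_single s]
    · simp
    · intro k _ hks; simp [hks]
    · intro h; exact absurd (Finset.mem_univ s) h
  · rw [if_neg hst]
    apply Finset.sum_eq_zero
    intro k _
    rcases eq_or_ne k s with rfl | hks
    · simp [hst]
    · simp [hks]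

lemma auxB_gram {F : Type*} [Field F] (σ : F ≃+* F) (c d : F) {q r m : ℕ}
    (hc : σ c = c) (hd : σ d = d) (hcd : c ^ 2 + d ^ 2 = -1)
    (ψ : (Fin m ⊕ Fin 1) ≃ ((Fin 2 × Fin q) ⊕ Fin r))
    (hψ : ∀ (t : Fin m) (z : Fin r), ψ (Sum.inl t) ≠ Sum.inr z)
    (x y : Fin m ⊕ (Fin 1 ⊕ Fin m)) :
    (∑ k, σ (auxB c d q r m ψ k x) * auxB c d q r m ψ k y)
      = if y = auxPair m x then auxA q r m ψ x else 0 := by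
  have hε : ∀ t : Fin m,
      Sum.elim (fun _ => (-1 : F)) (fun _ => (1 : F)) (ψ (Sum.inl t)) = -1 := by
    intro t
    rcases hh : ψ (Sum.inl t) with w | z
    · simp
    · exact absurd hh (hψ t z)
  have hinj : ∀ s t : Fin m, s ≠ t → ψ (Sum.inl s) ≠ ψ (Sum.inl t) := by
    intro s t hst
    simp [ψ.injective.ne_iff, hst]
  have hmix : ∀ (s : Fin m) (z : Fin 1), ψ (Sum.inl s) ≠ ψ (Sum.inr z) := by
    intro s z
    simp [ψ.injective.ne_iff]
  rw [Fintype.sum_sum_type]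
  have hhead : ∀ x' y' : (Fin 2 × Fin q) ⊕ Fin r,
      (∑ w, σ (auxH c d q r w x') * auxH c d q r w y')
        = if x' = y' then Sum.elim (fun _ => (-1 : F)) (fun _ => (1 : F)) x' else 0 :=
    auxH_gram σ c d hc hd hcd
  rcases x with s | zs | s <;> rcases y with t | zt | t <;>
    simp only [auxB, Matrix.of_apply, auxA] <;> rw [auxPair] <;>
    rw [hhead]
  · -- inl s, inl t
    rw [aux_tail σ s t 1 1]
    rcases eq_or_ne s t with rfl | hst
    · rw [if_pos rfl, if_pos rfl, hε s, if_neg (by simp)]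
      simp
    · rw [if_neg (hinj s t hst), if_neg hst, if_neg (by simp)]
      simp
  · -- inl s, mid
    rw [if_neg (hmix s zt)]
    have htail : (∑ k : Fin m, σ ((if k = s then 1 else 0 : F)) * 0) = 0 := by
      apply Finset.sum_eq_zero; intro k _; simp
    rw [htail, if_neg (by simp)]
    simp
  · -- inl s, partner t
    rw [aux_tail σ s t 1 (-1)]
    rcases eq_or_ne s t with rfl | hst
    · rw [if_pos rfl, if_pos rfl, hε s, if_pos rfl]
      simp; norm_num
    · rw [if_neg (hinj s t hst), if_neg hst,
        if_neg (by simp only [Sum.inr.injEq]; exact fun h => hst h.symm)]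
      simp
  · -- mid, inl t
    rw [if_neg (Ne.symm (hmix t zs))]
    have htail : (∑ k : Fin m, σ (0 : F) * (if k = t then 1 else 0)) = 0 := by
      apply Finset.sum_eq_zero; intro k _; simp
    rw [htail, if_neg (by simp)]
    simp
  · -- mid, mid
    have hzz : zs = zt := Subsingleton.elim _ _
    subst hzz
    rw [if_pos rfl]
    have htail : (∑ k : Fin m, σ (0 : F) * (0 : F)) = 0 := by
      apply Finset.sum_eq_zero; intro k _; simp
    rw [htail, if_pos (by simp)]
    simp
  · -- mid, partner t
    rw [if_neg (Ne.symm (hmix t zs))]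
    have htail : (∑ k : Fin m, σ (0 : F) * (if k = t then (-1 : F) else 0)) = 0 := by
      apply Finset.sum_eq_zero; intro k _; simp
    rw [htail, if_neg (by simp)]
    simp
  · -- partner s, inl t
    rw [aux_tail σ s t (-1) 1]
    rcases eq_or_ne s t with rfl | hst
    · rw [if_pos rfl, if_pos rfl, hε s, if_pos rfl]
      simp only [map_neg, _root_.map_one]; norm_num
    · rw [if_neg (hinj s t hst), if_neg hst,
        if_neg (by simp only [Sum.inl.injEq]; exact fun h => hst h.symm)]
      simp
  · -- partner s, mid
    rw [if_neg (hmix s zt)]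
    have htail : (∑ k : Fin m, σ ((if k = s then (-1 : F) else 0)) * 0) = 0 := by
      apply Finset.sum_eq_zero; intro k _; simp
    rw [htail, if_neg (by simp)]
    simp
  · -- partner s, partner t
    rw [aux_tail σ s t (-1) (-1)]
    rcases eq_or_ne s t with rfl | hst
    · rw [if_pos rfl, if_pos rfl, hε s, if_neg (by simp)]
      simp
    · rw [if_neg (hinj s t hst), if_neg hst, if_neg (by simp)]
      simp

end BigMatrix

section Assemble
variable {F : Type*} [Field F]

/-- column index equivalence -/
def auxEcol (n m : ℕ) (hm : n = 2 * m + 1) : (Fin m ⊕ (Fin 1 ⊕ Fin m)) ≃ Fin n where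
  toFun x := match x with
    | Sum.inl t => ⟨t, by have := t.2; omega⟩
    | Sum.inr (Sum.inl _) => ⟨m, by omega⟩
    | Sum.inr (Sum.inr t) => ⟨2 * m - t, by have := t.2; omega⟩
  invFun j :=
    if h : (j : ℕ) < m then Sum.inl ⟨j, h⟩
    else if h2 : (j : ℕ) = m then Sum.inr (Sum.inl 0)
    else Sum.inr (Sum.inr ⟨2 * m - j, by have := j.2; omega⟩)
  left_inv := by
    rintro (t | z | t)
    · have ht := t.2
      simp only []
      rw [dif_pos ht]
    · simp only []
      rw [dif_neg (lt_irrefl m), dif_pos (by trivial)]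
      exact congrArg _ (congrArg _ (Subsingleton.elim _ _))
    · have ht := t.2
      simp only []
      rw [dif_neg (by omega : ¬(2 * m - (t : ℕ) < m)),
        dif_neg (by omega : ¬(2 * m - (t : ℕ) = m))]
      exact congrArg _ (congrArg _ (Fin.ext (by simp; omega)))
  right_inv j := by
    by_cases h : (j : ℕ) < m
    · simp only [dif_pos h]
    · by_cases h2 : (j : ℕ) = m
      · simp only [dif_neg h, dif_pos h2]
        apply Fin.ext
        simp [h2]
      · have hj := j.2
        simp only [dif_neg h, dif_neg h2]
        apply Fin.ext
        simp
        omega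

lemma auxEcol_pair (n m : ℕ) (hm : n = 2 * m + 1) (x : Fin m ⊕ (Fin 1 ⊕ Fin m)) :
    auxEcol n m hm (auxPair m x) = Fin.rev (auxEcol n m hm x) := by
  rcases x with t | z | t <;>
  · apply Fin.ext
    simp only [auxEcol, auxPair, Equiv.coe_fn_mk, Fin.val_rev]
    first
      | (have := t.2; omega)
      | omega

lemma aux_partB (σ : F ≃+* F) (c d : F) (hc : σ c = c) (hd : σ d = d)
    (hcd : c ^ 2 + d ^ 2 = -1) (h2 : (2 : F) ≠ 0) (n m : ℕ) (hm : n = 2 * m + 1) :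
    ∃ (B : Matrix (Fin n) (Fin n) F) (a : Fin n → F),
      (∀ i, a i = -2 ∨ a i = -1 ∨ a i = 1) ∧
      (Bᵀ).map ⇑σ * B = Matrix.of (fun i j => if j = Fin.rev i then a i else 0) ∧
      IsUnit B := by
  set q := (m + 1) / 2 with hq
  set r := (m + 1) % 2 with hrdef
  have hqr : 2 * q + r = m + 1 := Nat.div_add_mod (m + 1) 2
  have hr : r < 2 := Nat.mod_lt _ (by norm_num)
  obtain ⟨ψ, hψ⟩ : ∃ ψ : (Fin m ⊕ Fin 1) ≃ ((Fin 2 × Fin q) ⊕ Fin r),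
      ∀ t z, ψ (Sum.inl t) ≠ Sum.inr z := by
    rcases (by omega : r = 0 ∨ r = 1) with h0 | h1
    · refine ⟨Fintype.equivOfCardEq (by simp; omega), fun t z => ?_⟩
      exfalso
      have := z.2
      omega
    · have e1 : Fin m ≃ (Fin 2 × Fin q) := Fintype.equivOfCardEq (by simp; omega)
      have e2 : Fin 1 ≃ Fin r := Fintype.equivOfCardEq (by simp; omega)
      exact ⟨Equiv.sumCongr e1 e2, fun t z => by simp⟩
  let erow : (((Fin 2 × Fin q) ⊕ Fin r) ⊕ Fin m) ≃ Fin n :=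
    Fintype.equivOfCardEq (by simp; omega)
  let ecol : (Fin m ⊕ (Fin 1 ⊕ Fin m)) ≃ Fin n := auxEcol n m hm
  set B : Matrix (Fin n) (Fin n) F :=
    (auxB c d q r m ψ).submatrix erow.symm ecol.symm with hB
  set a : Fin n → F := fun i => auxA q r m ψ (ecol.symm i) with ha
  have haval : ∀ i, a i = -2 ∨ a i = -1 ∨ a i = 1 := by
    intro i
    have hai : a i = auxA q r m ψ (ecol.symm i) := rfl
    rw [hai]
    rcases h : ecol.symm i with t | z | t
    · left; rfl
    · rcases hh : ψ (Sum.inr z) with w | zz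
      · right; left
        have hr : auxA q r m ψ (Sum.inr (Sum.inl z))
            = Sum.elim (fun _ => (-1 : F)) (fun _ => (1 : F)) (ψ (Sum.inr z)) := rfl
        rw [hr, hh]; simp
      · right; right
        have hr : auxA q r m ψ (Sum.inr (Sum.inl z))
            = Sum.elim (fun _ => (-1 : F)) (fun _ => (1 : F)) (ψ (Sum.inr z)) := rfl
        rw [hr, hh]; simp
    · left; rfl
  have hgram : (Bᵀ).map ⇑σ * B
      = Matrix.of (fun i j => if j = Fin.rev i then a i else 0) := by
    rw [hB, Matrix.transpose_submatrix, ← Matrix.submatrix_map,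
      Matrix.submatrix_mul_equiv]
    ext i j
    rw [Matrix.submatrix_apply]
    have entry : ((auxB c d q r m ψ)ᵀ.map ⇑σ * auxB c d q r m ψ)
        (ecol.symm i) (ecol.symm j)
        = if ecol.symm j = auxPair m (ecol.symm i) then auxA q r m ψ (ecol.symm i)
          else 0 := by
      rw [← auxB_gram σ c d hc hd hcd ψ hψ (ecol.symm i) (ecol.symm j)]
      simp [Matrix.mul_apply]
    rw [entry]
    have hcond : (ecol.symm j = auxPair m (ecol.symm i)) ↔ (j = Fin.rev i) := by
      constructor
      · intro h
        have := congrArg ecol h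
        rw [Equiv.apply_symm_apply, auxEcol_pair, Equiv.apply_symm_apply] at this
        exact this
      · intro h
        apply ecol.injective
        rw [Equiv.apply_symm_apply, auxEcol_pair, Equiv.apply_symm_apply]
        exact h
    rw [if_congr hcond rfl rfl]
    rfl
  have hane : ∀ i, a i ≠ 0 := by
    intro i
    rcases haval i with h | h | h <;> rw [h]
    · exact fun hcon => h2 (neg_eq_zero.mp hcon)
    · simp
    · simp
  have hAA' : Matrix.of (fun i j => if j = Fin.rev i then a i else 0) *
      Matrix.of (fun i j : Fin n => if j = Fin.rev i then (a (Fin.rev i))⁻¹ else 0) = 1 := by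
    ext i j
    rw [Matrix.mul_apply, Finset.sum_eq_single (Fin.rev i)]
    · simp only [Matrix.of_apply, if_pos rfl, Fin.rev_rev]
      rcases eq_or_ne j i with rfl | hji
      · rw [if_pos rfl, Matrix.one_apply_eq]
        exact mul_inv_cancel₀ (hane j)
      · rw [if_neg hji, Matrix.one_apply_ne (Ne.symm hji), mul_zero]
    · intro k _ hk
      simp only [Matrix.of_apply]
      rw [if_neg hk, zero_mul]
    · intro hmem; exact absurd (Finset.mem_univ _) hmem
  have hdetA : (Matrix.of (fun i j : Fin n => if j = Fin.rev i then a i else 0)).det ≠ 0 := by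
    intro h
    have hd := congrArg Matrix.det hAA'
    rw [Matrix.det_mul, h, zero_mul, Matrix.det_one] at hd
    exact zero_ne_one hd
  have hdetB : B.det ≠ 0 := by
    intro h
    apply hdetA
    have hd := congrArg Matrix.det hgram
    rw [Matrix.det_mul, h, mul_zero] at hd
    exact hd.symm
  exact ⟨B, a, haval, hgram,
    (Matrix.isUnit_iff_isUnit_det B).mpr (isUnit_iff_ne_zero.mpr hdetB)⟩

end Assemble

/-- **Lemma.** Let `F/F₀` be a quadratic extension of nonarchimedean locally compact fields of
residue characteristic `p ≠ 2` with nontrivial automorphism `σ`, let `n` be odd and `𝔞` the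
standard Iwahori order of `M_n(F)`.  Then there are `g₁ ∈ GL_n(F)` and units
`a₁, …, a_n ∈ o_F^×` with `σ(ᵗg₁⁻¹)·g₁⁻¹ = A`, `A` the antidiagonal matrix with
`(i, n+1−i)` entry `a_i`, and `σ(ᵗ(g₁⁻¹𝔞g₁)) = g₁⁻¹𝔞g₁`. -/
theorem stmt_4
    (p : ℕ) (hp : p.Prime) (hp2 : p ≠ 2)
    (F : Type*) [Field F] [Valued F ℤᵐ⁰] [CompleteSpace F]
    (hdisc : Function.Surjective (fun x : F => (Valued.v x : ℤᵐ⁰)))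
    (hfinres : Finite (IsLocalRing.ResidueField
      ((Valued.v : Valuation F ℤᵐ⁰).valuationSubring)))
    (hcharres : CharP (IsLocalRing.ResidueField
      ((Valued.v : Valuation F ℤᵐ⁰).valuationSubring)) p)
    (σ : F ≃+* F) (hσ2 : ∀ x, σ (σ x) = x) (hσne : σ ≠ RingEquiv.refl F)
    (hσv : ∀ x : F, Valued.v (σ x) = Valued.v x)
    (n : ℕ) (hnodd : Odd n) (hnpos : 0 < n)
    (𝔞 : Set (Matrix (Fin n) (Fin n) F))
    (h𝔞 : 𝔞 = {x | ∀ i j : Fin n,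
      (i ≤ j → Valued.v (x i j) ≤ 1) ∧ (j < i → Valued.v (x i j) < 1)}) :
    ∃ (g₁ : (Matrix (Fin n) (Fin n) F)ˣ) (a : Fin n → F),
      (∀ i, Valued.v (a i) = 1) ∧
      ((((g₁⁻¹ : (Matrix (Fin n) (Fin n) F)ˣ) : Matrix (Fin n) (Fin n) F)ᵀ).map σ) *
          ((g₁⁻¹ : (Matrix (Fin n) (Fin n) F)ˣ) : Matrix (Fin n) (Fin n) F)
        = Matrix.of (fun i j => if j = Fin.rev i then a i else 0) ∧
      (fun x : Matrix (Fin n) (Fin n) F => (xᵀ).map σ) ''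
          ((fun x => ((g₁⁻¹ : (Matrix (Fin n) (Fin n) F)ˣ) : Matrix (Fin n) (Fin n) F) * x *
            (g₁ : Matrix (Fin n) (Fin n) F)) '' 𝔞)
        = (fun x => ((g₁⁻¹ : (Matrix (Fin n) (Fin n) F)ˣ) : Matrix (Fin n) (Fin n) F) * x *
            (g₁ : Matrix (Fin n) (Fin n) F)) '' 𝔞 := by
  obtain ⟨hv2, c, d, hc, hd, hcd⟩ :=
    aux_partA p hp hp2 F hfinres hcharres σ hσv
  have h2ne : (2 : F) ≠ 0 := by
    intro h; rw [h] at hv2; simp at hv2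
  obtain ⟨m, hm⟩ := hnodd
  obtain ⟨B, a, haval, hgram, hBu⟩ := aux_partB σ c d hc hd hcd h2ne n m hm
  have hva : ∀ i, Valued.v (a i) = 1 := by
    intro i
    rcases haval i with h | h | h <;> rw [h]
    · rw [Valuation.map_neg]; exact hv2
    · rw [Valuation.map_neg, Valuation.map_one]
    · rw [Valuation.map_one]
  have hane : ∀ i, a i ≠ 0 := by
    intro i h
    have := hva i
    rw [h] at this
    simp at this
  obtain ⟨U, hU⟩ := hBu
  refine ⟨U⁻¹, a, hva, ?_, ?_⟩
  · simp only [inv_inv, hU]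
    exact hgram
  · simp only [inv_inv, hU]
    -- notation
    set G : Matrix (Fin n) (Fin n) F := ((U⁻¹ : (Matrix (Fin n) (Fin n) F)ˣ) :
      Matrix (Fin n) (Fin n) F) with hG
    have hBG : B * G = 1 := by rw [← hU, hG]; exact_mod_cast U.mul_inv
    have hGB : G * B = 1 := by rw [← hU, hG]; exact_mod_cast U.inv_mul
    set τ : Matrix (Fin n) (Fin n) F → Matrix (Fin n) (Fin n) F :=
      fun x => (xᵀ).map ⇑σ with hτ
    have hτmul : ∀ X Y, τ (X * Y) = τ Y * τ X := by
      intro X Y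
      ext i j
      simp only [hτ, Matrix.map_apply, Matrix.transpose_apply, Matrix.mul_apply,
        map_sum, _root_.map_mul]
      apply Finset.sum_congr rfl
      intro k _
      ring
    have hτone : τ (1 : Matrix (Fin n) (Fin n) F) = 1 := by
      ext i j
      simp only [hτ, Matrix.map_apply, Matrix.transpose_apply, Matrix.one_apply]
      rcases eq_or_ne j i with rfl | h
      · simp
      · rw [if_neg h, if_neg (Ne.symm h), map_zero]
    have hτinv : ∀ X, τ (τ X) = X := by
      intro X
      ext i j
      simp only [hτ, Matrix.map_apply, Matrix.transpose_apply]
      exact hσ2 _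
    set Amat : Matrix (Fin n) (Fin n) F :=
      Matrix.of (fun i j => if j = Fin.rev i then a i else 0) with hAmat
    set A' : Matrix (Fin n) (Fin n) F :=
      Matrix.of (fun i j => if j = Fin.rev i then (a (Fin.rev i))⁻¹ else 0) with hA'
    have hAA' : Amat * A' = 1 := by
      ext i j
      rw [hAmat, hA', Matrix.mul_apply, Finset.sum_eq_single (Fin.rev i)]
      · simp only [Matrix.of_apply, if_pos rfl, Fin.rev_rev]
        rcases eq_or_ne j i with rfl | hji
        · rw [if_pos rfl, Matrix.one_apply_eq]
          exact mul_inv_cancel₀ (hane j)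
        · rw [if_neg hji, Matrix.one_apply_ne (Ne.symm hji), mul_zero]
      · intro k _ hk
        simp only [Matrix.of_apply]
        rw [if_neg hk, zero_mul]
      · intro hmem; exact absurd (Finset.mem_univ _) hmem
    have hτB : τ B = Amat * G := by
      calc τ B = τ B * (B * G) := by rw [hBG, mul_one]
      _ = (τ B * B) * G := by rw [mul_assoc]
      _ = Amat * G := by rw [hτ]; rw [hgram, hAmat]
    have hτGτB : τ G * τ B = 1 := by rw [← hτmul, hBG, hτone]
    have hτGA : τ G * Amat = B := by
      have : τ G * (Amat * G) * B = B := by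
        rw [← hτB, hτGτB, one_mul]
      calc τ G * Amat = τ G * Amat * (G * B) := by rw [hGB, mul_one]
      _ = τ G * (Amat * G) * B := by noncomm_ring
      _ = B := this
    have hτG : τ G = B * A' := by
      calc τ G = τ G * (Amat * A') := by rw [hAA', mul_one]
      _ = (τ G * Amat) * A' := by rw [mul_assoc]
      _ = B * A' := by rw [hτGA]
    -- entry formula for the conjugated matrix
    have hzentry : ∀ (x : Matrix (Fin n) (Fin n) F) (i j : Fin n),
        (A' * τ x * Amat) i j
          = (a (Fin.rev i))⁻¹ * σ (x (Fin.rev j) (Fin.rev i)) * a (Fin.rev j) := by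
      intro x i j
      rw [Matrix.mul_apply, Finset.sum_eq_single (Fin.rev j)]
      · have h1 : (A' * τ x) i (Fin.rev j) = (a (Fin.rev i))⁻¹ * σ (x (Fin.rev j) (Fin.rev i)) := by
          rw [Matrix.mul_apply, Finset.sum_eq_single (Fin.rev i)]
          · rw [hA']
            simp only [Matrix.of_apply, if_pos rfl, if_true, hτ, Matrix.map_apply,
              Matrix.transpose_apply]
          · intro k _ hk
            rw [hA']
            simp only [Matrix.of_apply]
            rw [if_neg hk, zero_mul]
          · intro hmem; exact absurd (Finset.mem_univ _) hmem
        rw [h1, hAmat]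
        simp only [Matrix.of_apply, Fin.rev_rev, if_pos rfl, if_true]
      · intro k _ hk
        rw [hAmat]
        simp only [Matrix.of_apply]
        rw [if_neg (fun h => hk (by rw [h, Fin.rev_rev])), mul_zero]
      · intro hmem; exact absurd (Finset.mem_univ _) hmem
    -- membership of the conjugate
    have hzmem : ∀ x ∈ 𝔞, A' * τ x * Amat ∈ 𝔞 := by
      intro x hx
      rw [h𝔞] at hx ⊢
      intro i j
      have hv : Valued.v ((A' * τ x * Amat) i j) = Valued.v (x (Fin.rev j) (Fin.rev i)) := by
        rw [hzentry, Valuation.map_mul, Valuation.map_mul, map_inv₀, hva, hva, hσv]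
        simp
      constructor
      · intro hij
        rw [hv]
        exact (hx (Fin.rev j) (Fin.rev i)).1 (Fin.rev_le_rev.mpr hij)
      · intro hij
        rw [hv]
        exact (hx (Fin.rev j) (Fin.rev i)).2 (Fin.rev_lt_rev.mpr hij)
    -- the conjugation identity
    have hconj : ∀ x : Matrix (Fin n) (Fin n) F,
        τ (B * x * G) = B * (A' * τ x * Amat) * G := by
      intro x
      calc τ (B * x * G) = τ G * τ (B * x) := hτmul _ _
      _ = τ G * (τ x * τ B) := by rw [hτmul]
      _ = (B * A') * (τ x * (Amat * G)) := by rw [hτG, hτB]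
      _ = B * (A' * τ x * Amat) * G := by noncomm_ring
    -- final set equality
    apply Set.Subset.antisymm
    · rintro _ ⟨_, ⟨x, hx, rfl⟩, rfl⟩
      exact ⟨A' * τ x * Amat, hzmem x hx, (hconj x).symm⟩
    · rintro _ ⟨x, hx, rfl⟩
      refine ⟨τ (B * x * G), ?_, hτinv _⟩
      rw [hconj]
      exact ⟨A' * τ x * Amat, hzmem x hx, rfl⟩
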